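/- Assume: (i) exact-ν reachability: for all u₁, u₂ ∈ U there exist states w₀ = u₂, w₁, …, w_ν = u₁ with P_t(w_{i+1}|w_i) > 0 for 0 ≤ i < ν; (ii) ν-observability: for any two feasible state sequences u, ũ and any index d, if u[d] ≠ ũ[d] then there exists m̃ with d−ν < m̃ < d+ν and Y(u[m̃]) ≠ Y(ũ[m̃]); (iii) there are functions L_l, L_u : ℝ^n × O → ℝ such that for all r̂ ∈ ℝ^n and y₁ ∈ O: L_l(r̂, y₁) ≤ min_{y₂ ≠ y₁} [ log f(y₁, r̂) − log f(y₂, r̂) ] and L_u(r̂, y₁) ≥ max_{y₂ ≠ y₃} [ log f(y₃, r̂) − log f(y₂, r̂) ]. Let ρ > 0 be a real number, M ≥ 1 an integer, u a feasible state sequence, and m an integer with [m−(2M+1)ν, m+(2M+1)ν) ⊆ [0, N]. Suppose: L_l(r[d], Y(u[d])) > 3ν(ρ − log p_tr) for every d ∈ [m−2Mν, m+2Mν); Σ_{d=m+2Mν}^{m+(2M+1)ν−1} L_u(r[d], Y(u[d])) ≤ 3Mνρ + (ν+1)·log p_tr; and Σ_{d=m−(2M+1)ν}^{m−2Mν−1}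 L_u(r[d], Y(u[d])) ≤ 3Mνρ + ν·log p_tr. Then every ML sequence u* satisfies u*[m+ν−1] = u[m+ν−1]. -/

import Mathlib

open Finset

private lemma cover_le (ν : ℕ) (hν : 1 ≤ ν) (T : Finset ℤ) (α β : ℤ)
    (h : ∀ d : ℤ, α ≤ d → d ≤ β → ∃ t ∈ T, t - ν < d ∧ d < t + ν) :
    β + 1 - α ≤ (T.card : ℤ) * (2 * ν - 1) := by
  rcases le_or_gt α β with hab | hab
  · have hsub : Icc α β ⊆ T.biUnion (fun t => Icc (t - ν + 1) (t + ν - 1)) := by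
      intro d hd
      rw [mem_Icc] at hd
      obtain ⟨t, ht, h1, h2⟩ := h d hd.1 hd.2
      exact mem_biUnion.2 ⟨t, ht, mem_Icc.2 ⟨by omega, by omega⟩⟩
    have h1 := card_le_card hsub
    have h2 := card_biUnion_le (s := T) (t := fun t => Icc (t - (ν:ℤ) + 1) (t + ν - 1))
    have h3 : ∀ t : ℤ, (Icc (t - (ν:ℤ) + 1) (t + ν - 1)).card = 2 * ν - 1 := by
      intro t; rw [Int.card_Icc]; omega
    have h4 : ∑ t ∈ T, (Icc (t - (ν:ℤ) + 1) (t + ν - 1)).card = T.card * (2 * ν - 1) := by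
      rw [Finset.sum_congr rfl (fun t _ => h3 t), Finset.sum_const, smul_eq_mul]
    have h5 : (Icc α β).card = (β + 1 - α).toNat := Int.card_Icc α β
    have h6 : (β + 1 - α).toNat ≤ T.card * (2 * ν - 1) := by omega
    have h7 : ((β + 1 - α).toNat : ℤ) ≤ ((T.card * (2 * ν - 1) : ℕ) : ℤ) := by exact_mod_cast h6
    have h8 : (β + 1 - α) ≤ ((β + 1 - α).toNat : ℤ) := Int.self_le_toNat _
    have h9 : ((T.card * (2 * ν - 1) : ℕ) : ℤ) = (T.card : ℤ) * (2 * (ν:ℤ) - 1) := by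
      push_cast [Nat.cast_sub (by omega : 1 ≤ 2 * ν)]; ring
    omega
  · have : (0:ℤ) ≤ (T.card : ℤ) * (2 * ν - 1) := mul_nonneg (Int.natCast_nonneg _) (by omega)
    omega


private lemma sum_Ico_consec (f : ℤ → ℝ) {x y z : ℤ} (h1 : x ≤ y) (h2 : y ≤ z) :
    ∑ e ∈ Finset.Ico x y, f e + ∑ e ∈ Finset.Ico y z, f e = ∑ e ∈ Finset.Ico x z, f e := by
  rw [← Finset.sum_union (Finset.Ico_disjoint_Ico_consecutive x y z),
    Finset.Ico_union_Ico_eq_Ico h1 h2]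

/-- A state sequence of the hidden Markov system: zero outside `[0, N)` and all
transitions have positive weight. `Pt u1 u2` is the weight of the transition
from `u2` to `u1` (i.e. `P{next = u1 | current = u2}`). -/
def HMMFeasible {U : Type*} [Zero U] (N : ℕ) (Pt : U → U → ℝ) (u : ℤ → U) : Prop :=
  (∀ d : ℤ, d < 0 ∨ (N : ℤ) ≤ d → u d = 0) ∧ ∀ d : ℤ, 0 < Pt (u d) (u (d - 1))

/-- Negative sum log likelihood `S(u) = -∑_{d=0}^{N} log(f(Y(u[d]), r[d]) · P_t(u[d]|u[d-1]))`. -/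
noncomputable def HMMnSLL {U O : Type*} (N : ℕ) (Pt : U → U → ℝ) (Y : U → O)
    {n : ℕ} (f : O → EuclideanSpace ℝ (Fin n) → ℝ)
    (r : ℤ → EuclideanSpace ℝ (Fin n)) (u : ℤ → U) : ℝ :=
  - ∑ d ∈ Finset.Icc (0 : ℤ) (N : ℤ),
      Real.log (f (Y (u d)) (r d) * Pt (u d) (u (d - 1)))

set_option maxHeartbeats 4000000 in
/-- Theorem 3: the neighboring-log-likelihood optimality test. If the NLL bounds
hold on the window around time `m` for a feasible sequence `u`, then every ML
sequence agrees with `u` at time `m + ν - 1`. -/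
theorem stmt_1 {U O : Type*} [Fintype U] [Nonempty U] [Zero U] [Fintype O] [Nonempty O]
    (n N ν : ℕ) (hn : 1 ≤ n) (hN : 1 ≤ N) (hν : 1 ≤ ν)
    (Y : U → O) (Pt : U → U → ℝ) (hPt : ∀ u1 u2 : U, 0 ≤ Pt u1 u2)
    (f : O → EuclideanSpace ℝ (Fin n) → ℝ) (hf : ∀ y rr, 0 < f y rr)
    (r : ℤ → EuclideanSpace ℝ (Fin n))
    (ptr : ℝ)
    (hptr : IsLeast {t : ℝ | ∃ u1 u2 u3 u4 : U,
      0 < Pt u1 u2 ∧ 0 < Pt u3 u4 ∧ t = Pt u1 u2 / Pt u3 u4} ptr)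
    -- (i) exact-ν reachability
    (hreach : ∀ u1 u2 : U, ∃ w : ℕ → U, w 0 = u2 ∧ w ν = u1 ∧
      ∀ i < ν, 0 < Pt (w (i + 1)) (w i))
    -- (ii) ν-observability
    (hobs : ∀ u v : ℤ → U, HMMFeasible N Pt u → HMMFeasible N Pt v →
      ∀ d : ℤ, u d ≠ v d →
        ∃ mt : ℤ, d - (ν : ℤ) < mt ∧ mt < d + (ν : ℤ) ∧ Y (u mt) ≠ Y (v mt))
    -- (iii) the NLL bound functions
    (Ll Lu : EuclideanSpace ℝ (Fin n) → O → ℝ)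
    (hLl : ∀ (rr : EuclideanSpace ℝ (Fin n)) (y1 y2 : O), y2 ≠ y1 →
      Ll rr y1 ≤ Real.log (f y1 rr) - Real.log (f y2 rr))
    (hLu : ∀ (rr : EuclideanSpace ℝ (Fin n)) (y1 y2 y3 : O), y2 ≠ y3 →
      Real.log (f y3 rr) - Real.log (f y2 rr) ≤ Lu rr y1)
    (ρ : ℝ) (hρ : 0 < ρ) (M : ℤ) (hM : 1 ≤ M)
    (u : ℤ → U) (hu : HMMFeasible N Pt u)
    (m : ℤ)
    (hwin1 : 0 ≤ m - (2 * M + 1) * ν)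
    (hwin2 : m + (2 * M + 1) * ν ≤ (N : ℤ) + 1)
    (h1 : ∀ d : ℤ, m - 2 * M * ν ≤ d → d < m + 2 * M * ν →
      3 * (ν : ℝ) * (ρ - Real.log ptr) < Ll (r d) (Y (u d)))
    (h2 : ∑ d ∈ Finset.Ico (m + 2 * M * ν) (m + (2 * M + 1) * ν), Lu (r d) (Y (u d))
      ≤ 3 * (M : ℝ) * (ν : ℝ) * ρ + ((ν : ℝ) + 1) * Real.log ptr)
    (h3 : ∑ d ∈ Finset.Ico (m - (2 * M + 1) * ν) (m - 2 * M * ν), Lu (r d) (Y (u d))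
      ≤ 3 * (M : ℝ) * (ν : ℝ) * ρ + (ν : ℝ) * Real.log ptr) :
    ∀ us : ℤ → U, HMMFeasible N Pt us →
      (∀ v : ℤ → U, HMMFeasible N Pt v → HMMnSLL N Pt Y f r us ≤ HMMnSLL N Pt Y f r v) →
      us (m + ν - 1) = u (m + ν - 1) := by
  intro us hus hopt
  by_contra hne0
  classical
  set ζ : ℤ := (ν : ℤ) with hζdef
  have hζ : 1 ≤ ζ := by rw [hζdef]; exact_mod_cast hν
  set X : ℤ := M * ζ with hXdef
  have hX : ζ ≤ X := by nlinarith
  set c : ℤ := m + ζ - 1 with hcdef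
  set a : ℤ := m - 2 * X with hadef
  set b : ℤ := m + 2 * X with hbdef
  have hwa : m - (2 * M + 1) * ζ = a - ζ := by rw [hadef, hXdef]; ring
  have hwb : m + (2 * M + 1) * ζ = b + ζ := by rw [hbdef, hXdef]; ring
  have hwa2 : m - 2 * M * ζ = a := by rw [hadef, hXdef]; ring
  have hwb2 : m + 2 * M * ζ = b := by rw [hbdef, hXdef]; ring
  rw [hwa] at hwin1
  rw [hwb] at hwin2
  have hcN : c + 1 ≤ N := by omega
  have hc0 : 0 ≤ c := by omega
  have hcne : u c ≠ us c := fun h => hne0 h.symm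
  by_cases hO : ∀ y1 y2 : O, y1 = y2
  · obtain ⟨mt, _, _, hY⟩ := hobs u us hu hus c hcne
    exact hY (hO _ _)
  push_neg at hO
  obtain ⟨ya, yb, hyab⟩ := hO
  -- construction of q : end of the disagreement block
  have hexq : ∃ k : ℕ, u (c + 1 + k) = us (c + 1 + k) := by
    refine ⟨(N - (c + 1)).toNat, ?_⟩
    have he : c + 1 + ((N:ℤ) - (c + 1)).toNat = (N:ℤ) := by omega
    rw [he, hu.1 _ (Or.inr le_rfl), hus.1 _ (Or.inr le_rfl)]
  set kq : ℕ := Nat.find hexq with hkq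
  set q : ℤ := c + kq with hqdef
  have hqag : u (q + 1) = us (q + 1) := by
    have := Nat.find_spec hexq
    have he : c + 1 + (kq : ℤ) = q + 1 := by omega
    rwa [he] at this
  have hcq : c ≤ q := by omega
  have hexp : ∃ k : ℕ, u (c - 1 - k) = us (c - 1 - k) := by
    refine ⟨(c + 1).toNat, ?_⟩
    have he : c - 1 - ((c:ℤ) + 1).toNat = -2 := by omega
    rw [he, hu.1 _ (Or.inl (by omega)), hus.1 _ (Or.inl (by omega))]
  set kp : ℕ := Nat.find hexp with hkp
  set p : ℤ := c - kp with hpdef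
  have hpag : u (p - 1) = us (p - 1) := by
    have := Nat.find_spec hexp
    have he : c - 1 - (kp : ℤ) = p - 1 := by omega
    rwa [he] at this
  have hpc : p ≤ c := by omega
  have hblk : ∀ d : ℤ, p ≤ d → d ≤ q → u d ≠ us d := by
    intro d hd1 hd2
    rcases le_or_gt d c with hdc | hdc
    · rcases eq_or_lt_of_le hdc with rfl | hdc'
      · exact hcne
      · have hj : ((c - 1 - d).toNat : ℤ) = c - 1 - d := Int.toNat_of_nonneg (by omega)
        have := Nat.find_min hexp (m := (c - 1 - d).toNat) (by omega)
        intro hcon; apply this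
        have he : c - 1 - ((c - 1 - d).toNat : ℤ) = d := by omega
        rwa [he]
    · have hj : ((d - c - 1).toNat : ℤ) = d - c - 1 := Int.toNat_of_nonneg (by omega)
      have := Nat.find_min hexq (m := (d - c - 1).toNat) (by omega)
      intro hcon; apply this
      have he : c + 1 + ((d - c - 1).toNat : ℤ) = d := by omega
      rwa [he]
  have hq : q ≤ (N:ℤ) - 1 := by
    by_contra hcon
    exact hblk q (hpc.trans hcq) (le_refl q) (by
      rw [hu.1 _ (Or.inr (by omega)), hus.1 _ (Or.inr (by omega))]) |>.elim
  have hp0 : 0 ≤ p := by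
    by_contra hcon
    exact hblk p le_rfl (hpc.trans hcq) (by
      rw [hu.1 _ (Or.inl (by omega)), hus.1 _ (Or.inl (by omega))]) |>.elim
  -- every point of the block has a Y-mismatch inside the block within distance ν
  have hmis : ∀ d : ℤ, p ≤ d → d ≤ q →
      ∃ t : ℤ, (p ≤ t ∧ t ≤ q) ∧ (d - ζ < t ∧ t < d + ζ) ∧ Y (u t) ≠ Y (us t) := by
    intro d hd1 hd2
    classical
    have hval : ∀ e : ℤ, (p ≤ e ∧ e ≤ q) → (fun e => if p ≤ e ∧ e ≤ q then us e else u e) e = us e := by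
      intro e he; simp only [if_pos he]
    have hval2 : ∀ e : ℤ, ¬ (p ≤ e ∧ e ≤ q) → (fun e => if p ≤ e ∧ e ≤ q then us e else u e) e = u e := by
      intro e he; simp only [if_neg he]
    set u2 : ℤ → U := fun e => if p ≤ e ∧ e ≤ q then us e else u e with hu2
    have hu2feas : HMMFeasible N Pt u2 := by
      constructor
      · intro e he
        rw [hval2 e (by omega)]; exact hu.1 e he
      · intro e
        by_cases he1 : p ≤ e ∧ e ≤ q
        · by_cases he2 : p ≤ e - 1 ∧ e - 1 ≤ q
          · rw [show u2 e = us e from hval e he1, show u2 (e-1) = us (e-1) from hval (e-1) he2]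
            exact hus.2 e
          · have hep : e = p := by omega
            rw [show u2 e = us e from hval e he1, show u2 (e-1) = u (e-1) from hval2 (e-1) he2,
              hep, hpag]
            exact hus.2 p
        · by_cases he2 : p ≤ e - 1 ∧ e - 1 ≤ q
          · have heq : e = q + 1 := by omega
            have hh := hus.2 (q+1)
            rw [show q + 1 - 1 = q from by ring] at hh
            rw [show u2 e = u e from hval2 e he1, show u2 (e-1) = us (e-1) from hval (e-1) he2,
              heq, show q + 1 - 1 = q from by ring, hqag]
            exact hh
          · rw [show u2 e = u e from hval2 e he1, show u2 (e-1) = u (e-1) from hval2 (e-1) he2]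
            exact hu.2 e
    have hdne : u d ≠ u2 d := by
      rw [show u2 d = us d from hval d ⟨hd1, hd2⟩]
      exact hblk d hd1 hd2
    obtain ⟨t, ht1, ht2, ht3⟩ := hobs u u2 hu hu2feas d hdne
    have htpq : p ≤ t ∧ t ≤ q := by
      by_contra hcon
      rw [show u2 t = u t from hval2 t hcon] at ht3
      exact ht3 rfl
    refine ⟨t, htpq, ⟨by omega, by omega⟩, ?_⟩
    rwa [show u2 t = us t from hval t htpq] at ht3
  -- the competitor sequence
  set l : ℤ := max p a with hldef
  set rr : ℤ := min q (b-1) with hrdef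
  have hal : a ≤ l := le_max_right _ _
  have hpl : p ≤ l := le_max_left _ _
  have hlc : l ≤ c := max_le hpc (by omega)
  have hcr : c ≤ rr := le_min hcq (by omega)
  have hrq : rr ≤ q := min_le_left _ _
  have hrb : rr ≤ b - 1 := min_le_right _ _
  obtain ⟨wL, hwL0, hwLν, hwLpos⟩ := hreach (u (a-1)) (us (a-ζ-1))
  obtain ⟨wR, hwR0, hwRν, hwRpos⟩ := hreach (us (b+ζ-1)) (u (b-1))
  classical
  set v : ℤ → U := fun e =>
    if e < a - ζ then us e
    else if e < l then (if p < a then wL (e - (a - ζ) + 1).toNat else us e)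
    else if e ≤ rr then u e
    else if e < b + ζ then (if b ≤ q then wR (e - (b - 1)).toNat else us e)
    else us e with hvdef
  have hv1 : ∀ e, e < a - ζ → v e = us e := by
    intro e he; simp only [hvdef]; rw [if_pos he]
  have hv2 : ∀ e, a - ζ ≤ e → e < l →
      v e = (if p < a then wL (e - (a - ζ) + 1).toNat else us e) := by
    intro e he1 he2; simp only [hvdef]; rw [if_neg (by omega), if_pos he2]
  have hv3 : ∀ e, l ≤ e → e ≤ rr → v e = u e := by
    intro e he1 he2; simp only [hvdef]
    rw [if_neg (by omega), if_neg (by omega), if_pos he2]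
  have hv4 : ∀ e, rr < e → e < b + ζ →
      v e = (if b ≤ q then wR (e - (b - 1)).toNat else us e) := by
    intro e he1 he2; simp only [hvdef]
    rw [if_neg (by omega), if_neg (by omega), if_neg (by omega), if_pos he2]
  have hv5 : ∀ e, b + ζ ≤ e → v e = us e := by
    intro e he; simp only [hvdef]
    rw [if_neg (by omega), if_neg (by omega), if_neg (by omega), if_neg (by omega)]
  have htoν : (ζ).toNat = ν := by rw [hζdef]; exact Int.toNat_natCast ν
  have hvfeas : HMMFeasible N Pt v := by
    constructor
    · intro e he
      rcases he with he | he
      · rw [hv1 e (by omega)]; exact hus.1 e (Or.inl he)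
      · by_cases hbe : b + ζ ≤ e
        · rw [hv5 e hbe]; exact hus.1 e (Or.inr he)
        · -- N ≤ e < b + ζ ≤ N + 1, so e = b + ζ - 1 = N
          have heq : e = b + ζ - 1 := by omega
          rw [hv4 e (by omega) (by omega)]
          by_cases hbq : b ≤ q
          · rw [if_pos hbq, heq, show b + ζ - 1 - (b-1) = ζ from by ring, htoν, hwRν]
            exact hus.1 _ (Or.inr (by omega))
          · rw [if_neg hbq]; exact hus.1 e (Or.inr he)
    · intro e
      by_cases hc1 : e < a - ζ
      · rw [hv1 e hc1, hv1 (e-1) (by omega)]; exact hus.2 e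
      · by_cases hc2 : e < l
        · rw [hv2 e (by omega) hc2]
          by_cases hpa : p < a
          · have hla : l = a := max_eq_right (le_of_lt hpa)
            rw [if_pos hpa]
            by_cases he0 : e = a - ζ
            · rw [hv1 (e-1) (by omega), he0, show a - ζ - (a - ζ) + 1 = 1 from by ring,
                show us (a - ζ - 1) = wL 0 from hwL0.symm]
              have := hwLpos 0 (by omega)
              simpa using this
            · rw [hv2 (e-1) (by omega) (by omega), if_pos hpa]
              have hi : (e - 1 - (a - ζ) + 1).toNat + 1 = (e - (a - ζ) + 1).toNat := by omega
              rw [← hi]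
              exact hwLpos _ (by omega)
          · rw [if_neg hpa]
            by_cases he0 : e - 1 < a - ζ
            · rw [hv1 (e-1) he0]; exact hus.2 e
            · rw [hv2 (e-1) (by omega) (by omega), if_neg hpa]; exact hus.2 e
        · by_cases hc3 : e ≤ rr
          · rw [hv3 e (by omega) hc3]
            by_cases he0 : e = l
            · by_cases hpa : p < a
              · have hla : l = a := max_eq_right (le_of_lt hpa)
                rw [hv2 (e-1) (by omega) (by omega), if_pos hpa, he0, hla,
                  show a - 1 - (a - ζ) + 1 = ζ from by ring, htoν, hwLν]
                exact hu.2 a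
              · have hla : l = p := max_eq_left (by omega)
                have hvp : v (e-1) = us (e-1) := by
                  by_cases he1 : e - 1 < a - ζ
                  · exact hv1 _ he1
                  · rw [hv2 (e-1) (by omega) (by omega), if_neg hpa]
                rw [hvp, he0, hla, ← hpag]
                exact hu.2 p
            · rw [hv3 (e-1) (by omega) (by omega)]
              exact hu.2 e
          · by_cases hc4 : e < b + ζ
            · rw [hv4 e (by omega) hc4]
              by_cases hbq : b ≤ q
              · have hrb' : rr = b - 1 := min_eq_right (by omega)
                rw [if_pos hbq]
                by_cases he0 : e = b
                · rw [he0, show b - (b-1) = 1 from by ring,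
                    hv3 (b-1) (by omega) (by omega), show u (b-1) = wR 0 from hwR0.symm]
                  have := hwRpos 0 (by omega)
                  simpa using this
                · rw [hv4 (e-1) (by omega) (by omega), if_pos hbq]
                  have hi : (e - 1 - (b-1)).toNat + 1 = (e - (b-1)).toNat := by omega
                  rw [← hi]
                  exact hwRpos _ (by omega)
              · have hrq' : rr = q := min_eq_left (by omega)
                rw [if_neg hbq]
                by_cases he0 : e = q + 1
                · rw [hv3 (e-1) (by omega) (by omega), he0, show q + 1 - 1 = q from by ring,
                    ← hqag]
                  have hh := hu.2 (q+1)
                  rwa [show q + 1 - 1 = q from by ring] at hh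
                · rw [hv4 (e-1) (by omega) (by omega), if_neg hbq]
                  exact hus.2 e
            · rw [hv5 e (by omega)]
              by_cases he0 : e = b + ζ
              · have hvp : v (e-1) = us (e-1) := by
                  rw [hv4 (e-1) (by omega) (by omega)]
                  by_cases hbq : b ≤ q
                  · rw [if_pos hbq, he0, show b + ζ - 1 - (b - 1) = ζ from by ring, htoν, hwRν]
                  · rw [if_neg hbq]
                rw [hvp]; exact hus.2 e
              · rw [hv5 (e-1) (by omega)]; exact hus.2 e
  -- basic facts about ptr
  have hptr0 : 0 < ptr := by
    obtain ⟨x1, x2, x3, x4, hx1, hx2, heq⟩ := hptr.1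
    rw [heq]; exact div_pos hx1 hx2
  have hLP : Real.log ptr ≤ 0 := by
    refine Real.log_nonpos (le_of_lt hptr0) ?_
    exact hptr.2 ⟨u 0, u (0-1), u 0, u (0-1), hu.2 0, hu.2 0,
      (div_self (ne_of_gt (hu.2 0))).symm⟩
  have hLu0 : ∀ (rr' : EuclideanSpace ℝ (Fin n)) (y1 : O), 0 ≤ Lu rr' y1 := by
    intro rr' y1
    have hA := hLu rr' y1 ya yb hyab
    have hB := hLu rr' y1 yb ya hyab.symm
    linarith
  -- observation and transition difference functions
  set od : ℤ → ℝ := fun e =>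
    Real.log (f (Y (v e)) (r e)) - Real.log (f (Y (us e)) (r e)) with hoddef
  set td : ℤ → ℝ := fun e =>
    Real.log (Pt (v e) (v (e-1))) - Real.log (Pt (us e) (us (e-1))) with htddef
  have hod0 : ∀ e, v e = us e → od e = 0 := by
    intro e he; simp only [hoddef, he, sub_self]
  have htd0 : ∀ e, v e = us e → v (e-1) = us (e-1) → td e = 0 := by
    intro e he1 he2; simp only [htddef, he1, he2, sub_self]
  have htdLP : ∀ e, Real.log ptr ≤ td e := by
    intro e
    have hx := hvfeas.2 e
    have hy := hus.2 e
    have hrat : ptr ≤ Pt (v e) (v (e-1)) / Pt (us e) (us (e-1)) :=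
      hptr.2 ⟨_, _, _, _, hx, hy, rfl⟩
    have hlog := Real.log_le_log hptr0 hrat
    rwa [Real.log_div (ne_of_gt hx) (ne_of_gt hy)] at hlog
  -- the ML comparison
  have hml := hopt v hvfeas
  unfold HMMnSLL at hml
  have hsum0 : ∑ e ∈ Icc (0:ℤ) (N:ℤ),
      (Real.log (f (Y (v e)) (r e) * Pt (v e) (v (e-1))) -
       Real.log (f (Y (us e)) (r e) * Pt (us e) (us (e-1)))) ≤ 0 := by
    rw [Finset.sum_sub_distrib]; linarith
  have hterm : ∀ e : ℤ,
      Real.log (f (Y (v e)) (r e) * Pt (v e) (v (e-1))) -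
       Real.log (f (Y (us e)) (r e) * Pt (us e) (us (e-1))) = od e + td e := by
    intro e
    rw [Real.log_mul (ne_of_gt (hf _ _)) (ne_of_gt (hvfeas.2 e)),
      Real.log_mul (ne_of_gt (hf _ _)) (ne_of_gt (hus.2 e))]
    simp only [hoddef, htddef]; ring
  rw [Finset.sum_congr rfl (fun e _ => hterm e)] at hsum0
  have hvusL : a ≤ p → ∀ e, e < l → v e = us e := by
    intro hap e he
    rcases lt_or_ge e (a - ζ) with h' | h'
    · exact hv1 e h'
    · rw [hv2 e h' he, if_neg (by omega)]
  have hvusR : q < b → ∀ e, rr < e → v e = us e := by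
    intro hqb e he
    rcases lt_or_ge e (b + ζ) with h' | h'
    · rw [hv4 e he h', if_neg (by omega)]
    · exact hv5 e h'
  have hzero : ∀ e ∈ Icc (0:ℤ) (N:ℤ), e ∉ Ico (a-ζ) (b+ζ) → od e + td e = 0 := by
    intro e he hne
    rw [mem_Icc] at he; rw [mem_Ico] at hne; push_neg at hne
    rcases lt_or_ge e (a - ζ) with hlt | hge
    · rw [hod0 e (hv1 e hlt), htd0 e (hv1 e hlt) (hv1 (e-1) (by omega))]; ring
    · have hbe : b + ζ ≤ e := hne hge
      have hprev : v (e-1) = us (e-1) := by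
        rcases lt_or_ge (e-1) (b+ζ) with h' | h'
        · have he1 : e - 1 = b + ζ - 1 := by omega
          rw [hv4 (e-1) (by omega) (by omega)]
          by_cases hbq : b ≤ q
          · rw [if_pos hbq, he1, show b + ζ - 1 - (b - 1) = ζ from by ring, htoν, hwRν]
          · rw [if_neg hbq]
        · exact hv5 (e-1) h'
      rw [hod0 e (hv5 e hbe), htd0 e (hv5 e hbe) hprev]; ring
  have hDsum : ∑ e ∈ Ico (a-ζ) (b+ζ), (od e + td e) ≤ 0 := by
    rw [Finset.sum_subset (by intro x hx; rw [mem_Ico] at hx; rw [mem_Icc]; omega) hzero]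
    exact hsum0
  rw [Finset.sum_add_distrib] at hDsum
  -- rewrite the budget hypotheses in terms of a, b
  rw [hwa, hwa2] at h3
  rw [hwb2, hwb] at h2
  simp only [hwa2, hwb2] at h1
  -- left observation piece
  have hOL1 : p < a → -(3*(M:ℝ)*(ν:ℝ)*ρ + (ν:ℝ)*Real.log ptr) ≤ ∑ e ∈ Ico (a-ζ) a, od e := by
    intro _
    have hpt : ∀ e ∈ Ico (a-ζ) a, -(Lu (r e) (Y (u e))) ≤ od e := by
      intro e _
      by_cases hyy : Y (v e) = Y (us e)
      · have : od e = 0 := by simp only [hoddef, hyy, sub_self]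
        rw [this]; linarith [hLu0 (r e) (Y (u e))]
      · have := hLu (r e) (Y (u e)) (Y (v e)) (Y (us e)) hyy
        simp only [hoddef]; linarith
    have hs := Finset.sum_le_sum hpt
    have hneg : ∑ e ∈ Ico (a-ζ) a, -(Lu (r e) (Y (u e))) = -∑ e ∈ Ico (a-ζ) a, Lu (r e) (Y (u e)) := by
      rw [← Finset.sum_neg_distrib]
    rw [hneg] at hs
    linarith [h3]
  have hOL0 : a ≤ p → ∑ e ∈ Ico (a-ζ) a, od e = 0 := by
    intro hap; apply Finset.sum_eq_zero; intro e he; rw [mem_Ico] at he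
    exact hod0 e (hvusL hap e (by omega))
  -- right observation piece
  have hOR1 : b ≤ q → -(3*(M:ℝ)*(ν:ℝ)*ρ + ((ν:ℝ)+1)*Real.log ptr) ≤ ∑ e ∈ Ico b (b+ζ), od e := by
    intro _
    have hpt : ∀ e ∈ Ico b (b+ζ), -(Lu (r e) (Y (u e))) ≤ od e := by
      intro e _
      by_cases hyy : Y (v e) = Y (us e)
      · have : od e = 0 := by simp only [hoddef, hyy, sub_self]
        rw [this]; linarith [hLu0 (r e) (Y (u e))]
      · have := hLu (r e) (Y (u e)) (Y (v e)) (Y (us e)) hyy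
        simp only [hoddef]; linarith
    have hs := Finset.sum_le_sum hpt
    have hneg : ∑ e ∈ Ico b (b+ζ), -(Lu (r e) (Y (u e))) = -∑ e ∈ Ico b (b+ζ), Lu (r e) (Y (u e)) := by
      rw [← Finset.sum_neg_distrib]
    rw [hneg] at hs
    linarith [h2]
  have hOR0 : q < b → ∑ e ∈ Ico b (b+ζ), od e = 0 := by
    intro hqb; apply Finset.sum_eq_zero; intro e he; rw [mem_Ico] at he
    have hrq' : rr = q := min_eq_left (by omega)
    exact hod0 e (hvusR hqb e (by omega))
  -- middle observation piece
  set T : Finset ℤ := (Icc l rr).filter (fun e => Y (u e) ≠ Y (us e)) with hTdef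
  have hTne : T.Nonempty := by
    obtain ⟨t, ht1, ht2, ht3⟩ := hmis c hpc hcq
    refine ⟨t, ?_⟩
    rw [hTdef, mem_filter, mem_Icc]
    exact ⟨⟨max_le ht1.1 (by omega), le_min ht1.2 (by omega)⟩, ht3⟩
  have hmidod : ∀ e, l ≤ e → e ≤ rr →
      od e = Real.log (f (Y (u e)) (r e)) - Real.log (f (Y (us e)) (r e)) := by
    intro e h1' h2'; simp only [hoddef, hv3 e h1' h2']
  have hmid_eq : ∑ e ∈ Ico a b, od e = ∑ e ∈ Icc l rr, od e := by
    refine (Finset.sum_subset ?_ ?_).symm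
    · intro x hx; rw [mem_Icc] at hx; rw [mem_Ico]; omega
    · intro e he hne
      rw [mem_Ico] at he; rw [mem_Icc] at hne; push_neg at hne
      rcases lt_or_ge e l with h' | h'
      · by_cases hpa : p < a
        · have : l = a := max_eq_right hpa.le
          omega
        · exact hod0 e (hvusL (by omega) e h')
      · have h'' : rr < e := hne h'
        by_cases hbq : b ≤ q
        · have : rr = b - 1 := min_eq_right (by omega)
          omega
        · exact hod0 e (hvusR (by omega) e h'')
  have hmid_bound : (T.card : ℝ) * (3*(ν:ℝ)*(ρ - Real.log ptr)) < ∑ e ∈ Icc l rr, od e := by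
    rw [← Finset.sum_filter_add_sum_filter_not (Icc l rr) (fun e => Y (u e) ≠ Y (us e)) od]
    have hz : ∑ e ∈ (Icc l rr).filter (fun e => ¬ Y (u e) ≠ Y (us e)), od e = 0 := by
      apply Finset.sum_eq_zero; intro e he; rw [mem_filter, mem_Icc] at he
      rw [hmidod e he.1.1 he.1.2, not_ne_iff.mp he.2, sub_self]
    have hlt : ∑ _e ∈ T, (3*(ν:ℝ)*(ρ - Real.log ptr)) < ∑ e ∈ T, od e := by
      apply Finset.sum_lt_sum_of_nonempty hTne
      intro e he; rw [hTdef, mem_filter, mem_Icc] at he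
      have h1e := h1 e (by omega) (by omega)
      have hLle := hLl (r e) (Y (u e)) (Y (us e)) (Ne.symm he.2)
      rw [hmidod e he.1.1 he.1.2]; linarith
    rw [Finset.sum_const, nsmul_eq_mul] at hlt
    linarith [hz]
  -- transition sum bounds
  have htdsum : ∀ x y : ℤ, x ≤ y →
      ((y - x : ℤ) : ℝ) * Real.log ptr ≤ ∑ e ∈ Ico x y, td e := by
    intro x y hxy
    have hb := Finset.card_nsmul_le_sum (Ico x y) td (Real.log ptr) (fun e _ => htdLP e)
    rw [Int.card_Ico, nsmul_eq_mul] at hb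
    have hc : (((y - x).toNat : ℕ) : ℝ) = ((y - x : ℤ) : ℝ) := by
      rw [← Int.cast_natCast]
      congr 1
      omega
    rwa [hc] at hb
  have htd0L : a ≤ p → ∀ e ∈ Ico (a-ζ) p, td e = 0 := by
    intro hap e he; rw [mem_Ico] at he
    have hlp : l = p := max_eq_left hap
    exact htd0 e (hvusL hap e (by omega)) (hvusL hap (e-1) (by omega))
  have htd0R : q < b → ∀ e ∈ Ico (q+2) (b+ζ), td e = 0 := by
    intro hqb e he; rw [mem_Ico] at he
    have hrq' : rr = q := min_eq_left (by omega)
    exact htd0 e (hvusR hqb e (by omega)) (hvusR hqb (e-1) (by omega))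
  -- coverage counting
  have hK1 : 1 ≤ (T.card : ℤ) := by
    have := Finset.card_pos.mpr hTne
    exact_mod_cast this
  have hcover : ∀ α β : ℤ, p ≤ α → β ≤ q →
      (∀ d t : ℤ, α ≤ d → d ≤ β → p ≤ t → t ≤ q → d - ζ < t → t < d + ζ → (l ≤ t ∧ t ≤ rr)) →
      β + 1 - α ≤ (T.card : ℤ) * (2*ζ - 1) := by
    intro α β hα hβ hside
    have hcl := cover_le ν hν T α β ?_
    · rw [← hζdef] at hcl; exact hcl
    · intro d hd1 hd2
      obtain ⟨t, ht1, ht2, ht3⟩ := hmis d (by omega) (by omega)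
      have hlr := hside d t hd1 hd2 ht1.1 ht1.2 ht2.1 ht2.2
      refine ⟨t, ?_, by omega, by omega⟩
      rw [hTdef, mem_filter, mem_Icc]
      exact ⟨⟨hlr.1, hlr.2⟩, ht3⟩
  -- sum decompositions for od
  have eod1 : ∑ e ∈ Ico (a-ζ) a, od e + ∑ e ∈ Ico a (b+ζ), od e
      = ∑ e ∈ Ico (a-ζ) (b+ζ), od e := by
    apply sum_Ico_consec od <;> omega
  have eod2 : ∑ e ∈ Ico a b, od e + ∑ e ∈ Ico b (b+ζ), od e
      = ∑ e ∈ Ico a (b+ζ), od e := by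
    apply sum_Ico_consec od <;> omega
  -- real cast helpers
  have hXr : ((X:ℤ):ℝ) = (M:ℝ)*(ν:ℝ) := by rw [hXdef, hζdef]; push_cast; ring
  have har : ((a:ℤ):ℝ) = (m:ℝ) - 2*((X:ℤ):ℝ) := by rw [hadef]; push_cast; ring
  have hbr : ((b:ℤ):ℝ) = (m:ℝ) + 2*((X:ℤ):ℝ) := by rw [hbdef]; push_cast; ring
  have hmid_all : (T.card : ℝ) * (3*(ν:ℝ)*(ρ - Real.log ptr)) < ∑ e ∈ Ico a b, od e := by
    rw [hmid_eq]; exact hmid_bound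
  have hKr : (1:ℝ) ≤ (T.card : ℝ) := by exact_mod_cast hK1
  set LP : ℝ := Real.log ptr with hLPdef
  have hlt_le : ∀ t : ℤ, p ≤ t → a ≤ t → l ≤ t := fun t h1' h2' => max_le h1' h2'
  have hrt_le : ∀ t : ℤ, t ≤ q → t ≤ b - 1 → t ≤ rr := fun t h1' h2' => le_min h1' h2'
  clear_value ζ X c a b kq q kp p l rr v od td T LP
  -- the four cases
  rcases lt_or_ge p a with hpa | hpa <;> rcases lt_or_ge q b with hqb | hqb
  · -- Case 2 : p < a, q < b : left splice only
    have cv1 : q + 1 - (a+ζ-1) ≤ (T.card : ℤ) * (2*ζ - 1) := by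
      refine hcover (a+ζ-1) q (by omega) le_rfl ?_
      intro d t hd1 hd2 ht1 ht2 ht3 ht4
      exact ⟨hlt_le t ht1 (by omega), hrt_le t ht2 (by omega)⟩
    have cv2 : c + 1 - (a+ζ-1) ≤ (T.card : ℤ) * (2*ζ - 1) := by
      refine hcover (a+ζ-1) c (by omega) hcq ?_
      intro d t hd1 hd2 ht1 ht2 ht3 ht4
      exact ⟨hlt_le t ht1 (by omega), hrt_le t ht2 (by omega)⟩
    have iM : M + 1 ≤ (T.card : ℤ) := by
      by_contra hcon
      push_neg at hcon
      have h5 := mul_le_mul_of_nonneg_right (by omega : (T.card:ℤ) ≤ M) (by omega : (0:ℤ) ≤ 2*ζ-1)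
      have h6 : M*(2*ζ-1) = 2*X - M := by rw [hXdef]; ring
      omega
    have i2 : q - a + 2 ≤ 3*ζ*(T.card : ℤ) := by
      have e3 : 3*ζ*(T.card:ℤ) = (T.card:ℤ)*(2*ζ-1) + (T.card:ℤ)*(ζ+1) := by ring
      have e4 : (1:ℤ)*(ζ+1) ≤ (T.card:ℤ)*(ζ+1) := mul_le_mul_of_nonneg_right hK1 (by omega)
      omega
    -- transition bound
    have htdA : ∑ e ∈ Ico (a-ζ) (q+2), td e + ∑ e ∈ Ico (q+2) (b+ζ), td e
        = ∑ e ∈ Ico (a-ζ) (b+ζ), td e := by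
      apply sum_Ico_consec td <;> omega
    have htdB : ∑ e ∈ Ico (q+2) (b+ζ), td e = 0 :=
      Finset.sum_eq_zero (htd0R hqb)
    have htdC := htdsum (a-ζ) (q+2) (by omega)
    have hORz := hOR0 hqb
    have hOLb := hOL1 hpa
    -- integer facts to real
    have i2r : (q:ℝ) - (a:ℝ) + 2 ≤ 3*(ν:ℝ)*(T.card:ℝ) := by
      rw [hζdef] at i2; exact_mod_cast i2
    have iMr : (M:ℝ) + 1 ≤ (T.card:ℝ) := by exact_mod_cast iM
    have t1 : 0 ≤ (-LP) * (3*(ν:ℝ)*(T.card:ℝ) - ((q:ℝ) - (a:ℝ) + 2)) :=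
      mul_nonneg (by rw [hLPdef]; linarith) (by linarith)
    have t2 : 0 ≤ ρ * (3*(ν:ℝ)*(T.card:ℝ) - 3*(M:ℝ)*(ν:ℝ)) := by
      apply mul_nonneg (le_of_lt hρ)
      have hν0 : (0:ℝ) ≤ 3*(ν:ℝ) := by positivity
      have h7 := mul_le_mul_of_nonneg_left iMr hν0
      linarith
    have hcast : ((q + 2 - (a - ζ) : ℤ) : ℝ) = (q:ℝ) + 2 - ((a:ℝ) - (ν:ℝ)) := by
      rw [hζdef]; push_cast; ring
    rw [hcast] at htdC
    linarith [hDsum, hmid_all, eod1, eod2, htdA, htdB, htdC, hOLb, hORz, t1, t2, h3]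
  · -- Case 4 : p < a, b ≤ q : both splices
    have cv1 : (b-ζ) + 1 - (a+ζ-1) ≤ (T.card : ℤ) * (2*ζ - 1) := by
      refine hcover (a+ζ-1) (b-ζ) (by omega) (by omega) ?_
      intro d t hd1 hd2 ht1 ht2 ht3 ht4
      exact ⟨hlt_le t ht1 (by omega), hrt_le t ht2 (by omega)⟩
    have i2M : 2*M ≤ (T.card : ℤ) := by
      by_contra hcon
      push_neg at hcon
      have h5 := mul_le_mul_of_nonneg_right (by omega : (T.card:ℤ) ≤ 2*M-1) (by omega : (0:ℤ) ≤ 2*ζ-1)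
      have h6 : (2*M-1)*(2*ζ-1) = 4*X - 2*M - 2*ζ + 1 := by rw [hXdef]; ring
      omega
    have i2 : 4*X - 1 ≤ 3*ζ*(T.card : ℤ) := by
      have e3 : 3*ζ*(T.card:ℤ) = (T.card:ℤ)*(2*ζ-1) + (T.card:ℤ)*(ζ+1) := by ring
      have e4 : (2:ℤ)*(ζ+1) ≤ (T.card:ℤ)*(ζ+1) := mul_le_mul_of_nonneg_right (by omega) (by omega)
      omega
    have htdC := htdsum (a-ζ) (b+ζ) (by omega)
    have hOLb := hOL1 hpa
    have hORb := hOR1 hqb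
    have i2r : 4*((X:ℤ):ℝ) - 1 ≤ 3*(ν:ℝ)*(T.card:ℝ) := by
      rw [hζdef] at i2; exact_mod_cast i2
    have i2Mr : 2*(M:ℝ) ≤ (T.card:ℝ) := by exact_mod_cast i2M
    have t1 : 0 ≤ (-LP) * (3*(ν:ℝ)*(T.card:ℝ) - (4*((X:ℤ):ℝ) - 1)) :=
      mul_nonneg (by rw [hLPdef]; linarith) (by linarith)
    have t2 : 0 ≤ ρ * (3*(ν:ℝ)*(T.card:ℝ) - 6*(M:ℝ)*(ν:ℝ)) := by
      apply mul_nonneg (le_of_lt hρ)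
      have hν0 : (0:ℝ) ≤ 3*(ν:ℝ) := by positivity
      have h7 := mul_le_mul_of_nonneg_left i2Mr hν0
      linarith
    have hcast : ((b + ζ - (a - ζ) : ℤ) : ℝ) = (b:ℝ) + (ν:ℝ) - ((a:ℝ) - (ν:ℝ)) := by
      rw [hζdef]; push_cast; ring
    rw [hcast] at htdC
    have hE1 : (T.card:ℝ)*(3*(ν:ℝ)*(ρ-LP)) - (3*(M:ℝ)*(ν:ℝ)*ρ + (ν:ℝ)*LP)
        - (3*(M:ℝ)*(ν:ℝ)*ρ + ((ν:ℝ)+1)*LP) < ∑ e ∈ Ico (a-ζ) (b+ζ), od e := by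
      linarith [eod1, eod2, hmid_all, hOLb, hORb]
    have hE2 : ((b:ℝ) + (ν:ℝ) - ((a:ℝ) - (ν:ℝ))) * LP = (4*((X:ℤ):ℝ) + 2*(ν:ℝ)) * LP := by
      rw [har, hbr]; ring
    rw [hE2] at htdC
    linarith [hDsum, hE1, htdC, t1, t2]
  · -- Case 1 : a ≤ p, q < b : no splice
    have cv1 : q + 1 - p ≤ (T.card : ℤ) * (2*ζ - 1) := by
      refine hcover p q le_rfl le_rfl ?_
      intro d t hd1 hd2 ht1 ht2 ht3 ht4
      exact ⟨hlt_le t ht1 (by omega), hrt_le t ht2 (by omega)⟩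
    have i2 : q - p + 2 ≤ 3*ζ*(T.card : ℤ) := by
      have e3 : 3*ζ*(T.card:ℤ) = (T.card:ℤ)*(2*ζ-1) + (T.card:ℤ)*(ζ+1) := by ring
      have e4 : (1:ℤ)*(ζ+1) ≤ (T.card:ℤ)*(ζ+1) := mul_le_mul_of_nonneg_right hK1 (by omega)
      omega
    have htdA : ∑ e ∈ Ico (a-ζ) p, td e + ∑ e ∈ Ico p (b+ζ), td e
        = ∑ e ∈ Ico (a-ζ) (b+ζ), td e := by
      apply sum_Ico_consec td <;> omega
    have htdB : ∑ e ∈ Ico (a-ζ) p, td e = 0 := Finset.sum_eq_zero (htd0L hpa)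
    have htdA2 : ∑ e ∈ Ico p (q+2), td e + ∑ e ∈ Ico (q+2) (b+ζ), td e
        = ∑ e ∈ Ico p (b+ζ), td e := by
      apply sum_Ico_consec td <;> omega
    have htdB2 : ∑ e ∈ Ico (q+2) (b+ζ), td e = 0 := Finset.sum_eq_zero (htd0R hqb)
    have htdC := htdsum p (q+2) (by omega)
    have hOLz := hOL0 hpa
    have hORz := hOR0 hqb
    have i2r : (q:ℝ) - (p:ℝ) + 2 ≤ 3*(ν:ℝ)*(T.card:ℝ) := by
      rw [hζdef] at i2; exact_mod_cast i2
    have t1 : 0 ≤ (-LP) * (3*(ν:ℝ)*(T.card:ℝ) - ((q:ℝ) - (p:ℝ) + 2)) :=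
      mul_nonneg (by rw [hLPdef]; linarith) (by linarith)
    have t2 : 0 ≤ ρ * (3*(ν:ℝ)*(T.card:ℝ)) :=
      mul_nonneg (le_of_lt hρ) (by positivity)
    have hcast : ((q + 2 - p : ℤ) : ℝ) = (q:ℝ) + 2 - (p:ℝ) := by push_cast; ring
    rw [hcast] at htdC
    linarith [hDsum, hmid_all, eod1, eod2, htdA, htdB, htdA2, htdB2, htdC, hOLz, hORz, t1, t2]
  · -- Case 3 : a ≤ p, b ≤ q : right splice only
    have cv1 : (b-ζ) + 1 - p ≤ (T.card : ℤ) * (2*ζ - 1) := by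
      refine hcover p (b-ζ) le_rfl (by omega) ?_
      intro d t hd1 hd2 ht1 ht2 ht3 ht4
      exact ⟨hlt_le t ht1 (by omega), hrt_le t ht2 (by omega)⟩
    have cv2 : (b-ζ) + 1 - c ≤ (T.card : ℤ) * (2*ζ - 1) := by
      refine hcover c (b-ζ) hpc (by omega) ?_
      intro d t hd1 hd2 ht1 ht2 ht3 ht4
      exact ⟨hlt_le t ht1 (by omega), hrt_le t ht2 (by omega)⟩
    have iM : M ≤ (T.card : ℤ) := by
      by_contra hcon
      push_neg at hcon
      have h5 := mul_le_mul_of_nonneg_right (by omega : (T.card:ℤ) ≤ M-1) (by omega : (0:ℤ) ≤ 2*ζ-1)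
      have h6 : (M-1)*(2*ζ-1) = 2*X - M - 2*ζ + 1 := by rw [hXdef]; ring
      omega
    have i2 : b - p - 1 ≤ 3*ζ*(T.card : ℤ) := by
      have e3 : 3*ζ*(T.card:ℤ) = (T.card:ℤ)*(2*ζ-1) + (T.card:ℤ)*(ζ+1) := by ring
      have e4 : (1:ℤ)*(ζ+1) ≤ (T.card:ℤ)*(ζ+1) := mul_le_mul_of_nonneg_right hK1 (by omega)
      omega
    have htdA : ∑ e ∈ Ico (a-ζ) p, td e + ∑ e ∈ Ico p (b+ζ), td e
        = ∑ e ∈ Ico (a-ζ) (b+ζ), td e := by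
      apply sum_Ico_consec td <;> omega
    have htdB : ∑ e ∈ Ico (a-ζ) p, td e = 0 := Finset.sum_eq_zero (htd0L hpa)
    have htdC := htdsum p (b+ζ) (by omega)
    have hOLz := hOL0 hpa
    have hORb := hOR1 hqb
    have i2r : (b:ℝ) - (p:ℝ) - 1 ≤ 3*(ν:ℝ)*(T.card:ℝ) := by
      rw [hζdef] at i2; exact_mod_cast i2
    have iMr : (M:ℝ) ≤ (T.card:ℝ) := by exact_mod_cast iM
    have t1 : 0 ≤ (-LP) * (3*(ν:ℝ)*(T.card:ℝ) - ((b:ℝ) - (p:ℝ) - 1)) :=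
      mul_nonneg (by rw [hLPdef]; linarith) (by linarith)
    have t2 : 0 ≤ ρ * (3*(ν:ℝ)*(T.card:ℝ) - 3*(M:ℝ)*(ν:ℝ)) := by
      apply mul_nonneg (le_of_lt hρ)
      have hν0 : (0:ℝ) ≤ 3*(ν:ℝ) := by positivity
      have h7 := mul_le_mul_of_nonneg_left iMr hν0
      linarith
    have hcast : ((b + ζ - p : ℤ) : ℝ) = (b:ℝ) + (ν:ℝ) - (p:ℝ) := by
      rw [hζdef]; push_cast; ring
    rw [hcast] at htdC
    have hE1 : (T.card:ℝ)*(3*(ν:ℝ)*(ρ-LP))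
        - (3*(M:ℝ)*(ν:ℝ)*ρ + ((ν:ℝ)+1)*LP) < ∑ e ∈ Ico (a-ζ) (b+ζ), od e := by
      linarith [eod1, eod2, hmid_all, hOLz, hORb]
    have hE3 : ∑ e ∈ Ico p (b+ζ), td e = ∑ e ∈ Ico (a-ζ) (b+ζ), td e := by
      linarith [htdA, htdB]
    rw [hE3] at htdC
    linarith [hDsum, hE1, htdC, t1, t2]
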